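/- Let X and Y be subsets of a Hausdorff topological space T. Then the Cantor–Bendixson rank of X ∪ Y is at most the natural (Hessenberg) sum of the Cantor–Bendixson ranks of X and Y. In particular, if X is a union of n discrete subsets then its Cantor–Bendixson rank is at most n, and conversely. -/

import Mathlib

/-- The natural (Hessenberg) sum of ordinals, as `Ordinal.nadd` was defined in the older
Mathlib (removed since). -/
noncomputable def Ordinal.nadd : Ordinal.{u} → Ordinal.{u} → Ordinal.{u}
  | a, b =>
    max (⨆ x : Set.Iio a, Order.succ (Ordinal.nadd x.1 b))
      (⨆ x : Set.Iio b, Order.succ (Ordinal.nadd a x.1))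
termination_by a b => (a, b)
decreasing_by
  · exact Prod.Lex.left _ _ x.2
  · exact Prod.Lex.right _ x.2

namespace NaturalOps

infixl:65 " ♯ " => Ordinal.nadd

end NaturalOps

open Ordinal NaturalOps

/-- The Cantor–Bendixson derivative: the set of non-isolated points of `s`
(in the subspace topology). -/
def cbDeriv {X : Type u} [TopologicalSpace X] (s : Set X) : Set X :=
  {x | x ∈ s ∧ x ∈ closure (s \ {x})}

/-- Iterated Cantor–Bendixson derivatives of `A`, indexed by ordinals. -/
noncomputable def cbIter {X : Type u} [TopologicalSpace X] (A : Set X) (o : Ordinal.{u}) :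
    Set X :=
  Ordinal.limitRecOn o A (fun _ ih => cbDeriv ih)
    (fun o _ ih => ⋂ p : {b : Ordinal.{u} // b < o}, ih p.1 p.2)

/-- A set `D` is discrete (in the subspace topology) iff each of its points is isolated
in it. -/
def IsDiscreteSubset {X : Type u} [TopologicalSpace X] (D : Set X) : Prop :=
  ∀ x ∈ D, x ∉ closure (D \ {x})

section naddLemmas

theorem nadd_def (a b : Ordinal.{u}) : a ♯ b = max (⨆ x : Set.Iio a, Order.succ (x.1 ♯ b))
      (⨆ x : Set.Iio b, Order.succ (a ♯ x.1)) := by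
  rw [Ordinal.nadd]

theorem nadd_lt_nadd_right {a b : Ordinal.{u}} (h : a < b) (c : Ordinal.{u}) :
    a ♯ c < b ♯ c := by
  rw [nadd_def b c]
  exact lt_of_lt_of_le (Order.lt_succ (a ♯ c))
    (le_max_of_le_left (le_ciSup (f := fun x : Set.Iio b => Order.succ (x.1 ♯ c))
      Ordinal.bddAbove_of_small ⟨a, h⟩))

theorem nadd_comm (a b : Ordinal.{u}) : a ♯ b = b ♯ a := by
  induction a using Ordinal.induction generalizing b with
  | h a iha =>
    induction b using Ordinal.induction with
    | h b ihb =>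
      rw [nadd_def a b, nadd_def b a, max_comm]
      congr 1
      · exact iSup_congr fun y => by rw [ihb y.1 y.2]
      · exact iSup_congr fun x => by rw [iha x.1 x.2 b]

theorem nadd_zero (a : Ordinal.{u}) : a ♯ 0 = a := by
  induction a using Ordinal.induction with
  | h a ih =>
    rw [nadd_def]
    have h2 : (⨆ x : Set.Iio (0 : Ordinal.{u}), Order.succ (a ♯ x.1)) = 0 :=
      le_antisymm (ciSup_le' fun x => absurd x.2 (by simp)) zero_le
    rw [h2, max_eq_left zero_le]
    apply le_antisymm
    · exact ciSup_le' fun x => by rw [ih x.1 x.2]; exact Order.succ_le_of_lt x.2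
    · refine le_of_forall_lt fun c hc => ?_
      have h3 := le_ciSup (f := fun x : Set.Iio a => Order.succ (x.1 ♯ 0))
        Ordinal.bddAbove_of_small ⟨c, hc⟩
      simp only [ih c hc] at h3
      exact lt_of_lt_of_le (Order.lt_succ c) h3

theorem nadd_one (a : Ordinal.{u}) : a ♯ 1 = Order.succ a := by
  induction a using Ordinal.induction with
  | h a ih =>
    rw [nadd_def]
    apply le_antisymm
    · refine max_le (ciSup_le' fun x => ?_) (ciSup_le' fun y => ?_)
      · rw [ih x.1 x.2]; exact Order.succ_le_succ (Order.succ_le_of_lt x.2)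
      · have hy : y.1 = 0 := Ordinal.lt_one_iff_zero.mp y.2
        rw [hy, nadd_zero]
    · have h3 := le_ciSup (f := fun y : Set.Iio (1 : Ordinal.{u}) => Order.succ (a ♯ y.1))
        Ordinal.bddAbove_of_small ⟨0, (zero_lt_one : (0 : Ordinal.{u}) < 1)⟩
      simp only [nadd_zero] at h3
      exact le_max_of_le_right h3

end naddLemmas

section lemmas
variable {X : Type u} [TopologicalSpace X]

lemma cbDeriv_subset (s : Set X) : cbDeriv s ⊆ s := fun _ h => h.1

lemma cbDeriv_mono {s t : Set X} (h : s ⊆ t) : cbDeriv s ⊆ cbDeriv t :=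
  fun _ hx => ⟨h hx.1, closure_mono (Set.diff_subset_diff_left h) hx.2⟩

lemma cbIter_zero (A : Set X) : cbIter A 0 = A := Ordinal.limitRecOn_zero ..

lemma cbIter_succ (A : Set X) (o : Ordinal.{u}) :
    cbIter A (Order.succ o) = cbDeriv (cbIter A o) := Ordinal.limitRecOn_succ ..

lemma cbIter_limit (A : Set X) {o : Ordinal.{u}} (ho : Order.IsSuccLimit o) :
    cbIter A o = ⋂ p : {b : Ordinal.{u} // b < o}, cbIter A p.1 :=
  Ordinal.limitRecOn_limit _ _ _ _ ho

lemma cbIter_mono {A B : Set X} (h : A ⊆ B) (o : Ordinal.{u}) : cbIter A o ⊆ cbIter B o := by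
  induction o using Ordinal.limitRecOn with
  | zero => simpa [cbIter_zero] using h
  | add_one o ih => rw [Ordinal.add_one_eq_succ, cbIter_succ, cbIter_succ]; exact cbDeriv_mono ih
  | limit o ho ih =>
      rw [cbIter_limit A ho, cbIter_limit B ho]
      exact Set.iInter_mono fun p => ih p.1 p.2

lemma cbIter_subset (A : Set X) (o : Ordinal.{u}) : cbIter A o ⊆ A := by
  induction o using Ordinal.limitRecOn with
  | zero => rw [cbIter_zero]
  | add_one o ih => rw [Ordinal.add_one_eq_succ, cbIter_succ]; exact (cbDeriv_subset _).trans ih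
  | limit o ho ih =>
      rw [cbIter_limit A ho]
      exact (Set.iInter_subset _ (⟨0, ho.bot_lt⟩ : {b // b < o})).trans (ih 0 ho.bot_lt)

lemma cbIter_anti (A : Set X) {o₁ o₂ : Ordinal.{u}} (h : o₁ ≤ o₂) :
    cbIter A o₂ ⊆ cbIter A o₁ := by
  induction o₂ using Ordinal.limitRecOn with
  | zero => rw [nonpos_iff_eq_zero.mp h]
  | add_one o ih =>
      rw [Ordinal.add_one_eq_succ] at h ⊢
      rcases Order.le_succ_iff_eq_or_le.mp h with rfl | h'
      · rfl
      · rw [cbIter_succ]; exact (cbDeriv_subset _).trans (ih h')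
  | limit o ho ih =>
      rcases eq_or_lt_of_le h with rfl | h'
      · rfl
      · rw [cbIter_limit A ho]
        exact Set.iInter_subset _ (⟨o₁, h'⟩ : {b // b < o})

lemma cbIter_inter_open (A : Set X) {U : Set X} (hU : IsOpen U) (o : Ordinal.{u}) :
    cbIter A o ∩ U ⊆ cbIter (A ∩ U) o := by
  induction o using Ordinal.limitRecOn with
  | zero => rw [cbIter_zero, cbIter_zero]
  | add_one o ih =>
      rw [Ordinal.add_one_eq_succ, cbIter_succ, cbIter_succ]
      rintro x ⟨⟨hxA, hxcl⟩, hxU⟩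
      refine ⟨ih ⟨hxA, hxU⟩, ?_⟩
      rw [mem_closure_iff] at hxcl ⊢
      intro V hV hxV
      obtain ⟨y, hyVU, hy⟩ := hxcl (V ∩ U) (hV.inter hU) ⟨hxV, hxU⟩
      exact ⟨y, hyVU.1, ih ⟨hy.1, hyVU.2⟩, hy.2⟩
  | limit o ho ih =>
      rw [cbIter_limit A ho, cbIter_limit (A ∩ U) ho]
      rintro x ⟨hx, hxU⟩
      rw [Set.mem_iInter] at hx ⊢
      exact fun p => ih p.1 p.2 ⟨hx p, hxU⟩

lemma cbIter_rank {A : Set X} {α : Ordinal.{u}} (h : cbIter A α = ∅) {x : X} (hx : x ∈ A) :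
    ∃ a < α, x ∈ cbIter A a ∧ x ∉ cbIter A (Order.succ a) := by
  set S : Set Ordinal.{u} := {o | x ∉ cbIter A o} with hS
  have hne : S.Nonempty := ⟨α, by simp [hS, h]⟩
  set m := sInf S with hm
  have hmS : m ∈ S := csInf_mem hne
  have hmin : ∀ b < m, x ∈ cbIter A b := by
    intro b hb
    by_contra hb'
    exact absurd hb (not_lt.mpr (csInf_le' hb'))
  rcases Ordinal.zero_or_succ_or_isSuccLimit m with h0 | ⟨a, ha⟩ | hlim
  · exfalso
    have hmS' : x ∉ cbIter A 0 := by rw [← h0]; exact hmS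
    rw [cbIter_zero] at hmS'
    exact hmS' hx
  · refine ⟨a, ?_, hmin a (ha ▸ Order.lt_succ a), by rwa [ha]⟩
    have hmα : m ≤ α := csInf_le' (by simp [hS, h])
    exact lt_of_lt_of_le (ha ▸ Order.lt_succ a) hmα
  · exfalso
    apply hmS
    rw [cbIter_limit A hlim, Set.mem_iInter]
    exact fun p => hmin p.1 p.2

end lemmas

section main
variable {T : Type u} [TopologicalSpace T] [T1Space T]

/-- the asymmetric key step -/
lemma cb_key {g : Ordinal.{u}}
    (IH : ∀ g' < g, ∀ (α β : Ordinal.{u}) (X Y : Set T), α ♯ β = g' →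
      cbIter X α = ∅ → cbIter Y β = ∅ → cbIter (X ∪ Y) g' = ∅)
    {α β : Ordinal.{u}} {X Y : Set T} (hg : α ♯ β = g)
    (hX : cbIter X α = ∅) (hY : cbIter Y β = ∅) {x : T}
    (hx : x ∈ cbIter (X ∪ Y) g) (hxX : x ∈ X) : False := by
  obtain ⟨a, haα, hxa, hxsa⟩ := cbIter_rank hX hxX
  rw [cbIter_succ] at hxsa
  have hxncl : x ∉ closure (cbIter X a \ {x}) := fun hc => hxsa ⟨hxa, hc⟩
  set U : Set T := (closure (cbIter X a \ {x}))ᶜ with hU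
  have hUopen : IsOpen U := isClosed_closure.isOpen_compl
  have hxU : x ∈ U := hxncl
  set U' : Set T := U \ {x} with hU'
  have hU'open : IsOpen U' := hUopen.sdiff isClosed_singleton
  -- X ∩ U' has rank ≤ a
  have hXU' : cbIter (X ∩ U') a = ∅ := by
    apply Set.eq_empty_of_subset_empty
    intro y hy
    have hy1 : y ∈ cbIter X a := cbIter_mono Set.inter_subset_left a hy
    have hy2 : y ∈ U' := (cbIter_subset _ a hy).2
    exact hy2.1 (subset_closure ⟨hy1, hy2.2⟩)
  have hYU' : cbIter (Y ∩ U') β = ∅ :=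
    Set.eq_empty_of_subset_empty ((cbIter_mono Set.inter_subset_left β).trans hY.subset)
  have hg' : a ♯ β < g := hg ▸ nadd_lt_nadd_right haα β
  have hIH : cbIter ((X ∪ Y) ∩ U') (a ♯ β) = ∅ := by
    rw [Set.union_inter_distrib_right]
    exact IH _ hg' a β _ _ rfl hXU' hYU'
  -- x is in the (a♯β)+1 derivative of X ∪ Y
  have hxd : x ∈ cbDeriv (cbIter (X ∪ Y) (a ♯ β)) := by
    rw [← cbIter_succ]
    exact cbIter_anti _ (Order.succ_le_of_lt hg') hx
  have := hxd.2
  rw [mem_closure_iff] at this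
  obtain ⟨y, hyU, hy, hyx⟩ := this U hUopen hxU
  have hyU' : y ∈ U' := ⟨hyU, hyx⟩
  have : y ∈ cbIter ((X ∪ Y) ∩ U') (a ♯ β) := cbIter_inter_open _ hU'open _ ⟨hy, hyU'⟩
  rw [hIH] at this
  exact this

lemma cb_main (g : Ordinal.{u}) : ∀ (α β : Ordinal.{u}) (X Y : Set T), α ♯ β = g →
    cbIter X α = ∅ → cbIter Y β = ∅ → cbIter (X ∪ Y) g = ∅ := by
  induction g using Ordinal.induction with
  | h g IH =>
    intro α β X Y hg hX hY
    apply Set.eq_empty_of_subset_empty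
    intro x hx
    rcases cbIter_subset _ _ hx with hxX | hxY
    · exact (cb_key IH hg hX hY hx hxX).elim
    · refine (cb_key (X := Y) (Y := X) IH ?_ hY hX ?_ hxY).elim
      · rwa [nadd_comm]
      · rwa [Set.union_comm]

lemma cbIter_natCast (A : Set T) (n : ℕ) : cbIter A (n : Ordinal.{u}) = cbDeriv^[n] A := by
  induction n with
  | zero => simpa using cbIter_zero A
  | succ n ih =>
      have : ((n + 1 : ℕ) : Ordinal.{u}) = Order.succ (n : Ordinal.{u}) := by
        push_cast; rw [Ordinal.add_one_eq_succ]
      rw [this, cbIter_succ, ih, Function.iterate_succ_apply']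

lemma cbDeriv_iterate_subset (A : Set T) (n : ℕ) : cbDeriv^[n] A ⊆ A := by
  induction n with
  | zero => rfl
  | succ n ih => rw [Function.iterate_succ_apply']; exact (cbDeriv_subset _).trans ih

lemma discrete_union (Z : Set T) (n : ℕ) :
    (∃ f : Fin n → Set T, (∀ i, IsDiscreteSubset (f i)) ∧ Z = ⋃ i, f i) ↔
      cbIter Z (n : Ordinal.{u}) = ∅ := by
  constructor
  · rintro ⟨f, hf, rfl⟩
    induction n with
    | zero => simp [cbIter_zero]
    | succ n ih =>
        have hsplit : (⋃ i, f i) = (⋃ i : Fin n, f i.succ) ∪ f 0 := by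
          ext x; simp [Fin.exists_fin_succ, or_comm]
        have h1 : cbIter (f 0) (1 : Ordinal.{u}) = ∅ := by
          have : (1 : Ordinal.{u}) = Order.succ 0 := by simp
          rw [this, cbIter_succ, cbIter_zero]
          ext x
          simp only [cbDeriv, Set.mem_setOf_eq, Set.mem_empty_iff_false, iff_false, not_and]
          exact hf 0 x
        have hn : cbIter (⋃ i : Fin n, f i.succ) (n : Ordinal.{u}) = ∅ :=
          ih (fun i => f i.succ) (fun i => hf i.succ)
        have hns : (n : Ordinal.{u}) ♯ 1 = ((n + 1 : ℕ) : Ordinal.{u}) := by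
          rw [nadd_one, Nat.cast_succ, Ordinal.add_one_eq_succ]
        rw [hsplit, ← hns]
        exact cb_main _ _ _ _ _ rfl hn h1
  · intro h
    rw [cbIter_natCast] at h
    refine ⟨fun i => cbDeriv^[(i : ℕ)] Z \ cbDeriv^[(i : ℕ) + 1] Z, ?_, ?_⟩
    · intro i x hx hc
      have hx2 : x ∉ cbDeriv^[(i : ℕ) + 1] Z := hx.2
      rw [Function.iterate_succ_apply'] at hx2
      exact hx2 ⟨hx.1, closure_mono (Set.diff_subset_diff_left Set.diff_subset) hc⟩
    · ext x
      simp only [Set.mem_iUnion]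
      constructor
      · intro hxZ
        classical
        have hn : x ∉ cbDeriv^[n] Z := by rw [h]; exact Set.notMem_empty x
        have hex : ∃ k, x ∉ cbDeriv^[k] Z := ⟨n, hn⟩
        set m := Nat.find hex with hm
        have hmpos : 0 < m := by
          rcases Nat.eq_zero_or_pos m with h0 | h'
          · exfalso
            have hsp := Nat.find_spec hex
            rw [← hm, h0] at hsp
            exact hsp hxZ
          · exact h'
        have hmn : m ≤ n := Nat.find_le hn
        have hlt : m - 1 < n := by omega
        refine ⟨⟨m - 1, hlt⟩, ?_, ?_⟩
        · exact not_not.mp (Nat.find_min hex (show m - 1 < m by omega))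
        · simpa [Nat.sub_add_cancel hmpos] using Nat.find_spec hex
      · rintro ⟨i, hxi⟩
        exact cbDeriv_iterate_subset Z i hxi.1

end main

/-- Let `X`, `Y` be subsets of a Hausdorff space `T`.  The Cantor–Bendixson rank of
`X ∪ Y` is at most the Hessenberg (natural) sum of the ranks of `X` and `Y`
(rank `≤ γ` being expressed as: the `γ`-th derivative is empty).  In particular,
a set is a union of `n` discrete sets iff its Cantor–Bendixson rank is at most `n`. -/
theorem stmt2 {T : Type u} [TopologicalSpace T] [T2Space T] (X Y : Set T)
    (α β : Ordinal.{u}) (hX : cbIter X α = ∅) (hY : cbIter Y β = ∅) :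
    cbIter (X ∪ Y) (α ♯ β) = ∅ ∧
    ∀ (Z : Set T) (n : ℕ),
      ((∃ f : Fin n → Set T, (∀ i, IsDiscreteSubset (f i)) ∧ Z = ⋃ i, f i) ↔
        cbIter Z (n : Ordinal.{u}) = ∅) := by
  exact ⟨cb_main _ α β X Y rfl hX hY, fun Z n => discrete_union Z n⟩
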